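/- Let X be a standard normal real random variable. For every λ > 0 and every a ≥ 0, E[|X| · min(λ|X|, a)] = λ · erf(a/(√2 · λ)). -/

import Mathlib

open MeasureTheory ProbabilityTheory Classical

/-- Gauss error function `erf t = (2/√π) ∫₀ᵗ e^{−s²} ds`. -/
noncomputable def erf (t : ℝ) : ℝ := (2 / Real.sqrt Real.pi) * ∫ s in (0:ℝ)..t, Real.exp (-(s^2))

/-- `q(t) = √(2/π)·e^{−t²/2}/t + erf(t/√2) − 1`. -/
noncomputable def qfun (t : ℝ) : ℝ :=
  Real.sqrt (2 / Real.pi) * Real.exp (-(t^2)/2) / t + erf (t / Real.sqrt 2) - 1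

/-- Euclidean inner product on `Fin n → ℝ`. -/
def dot {n : ℕ} (x y : Fin n → ℝ) : ℝ := ∑ i, x i * y i

/-- Euclidean norm on `Fin n → ℝ`. -/
noncomputable def nrm {n : ℕ} (x : Fin n → ℝ) : ℝ := Real.sqrt (∑ i, (x i)^2)

/-- Standard Gaussian measure on `Fin n → ℝ` (i.i.d. `N(0,1)` coordinates). -/
noncomputable def stdGaussian (n : ℕ) : Measure (Fin n → ℝ) :=
  Measure.pi fun _ => gaussianReal 0 1

open Filter Set intervalIntegral in
private lemma aux_exp_cont : Continuous (fun x : ℝ => Real.exp (-x^2/2)) := by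
  continuity

open Filter Set in
private lemma aux_deriv_exp (x : ℝ) :
    HasDerivAt (fun y : ℝ => Real.exp (-y^2/2)) (Real.exp (-x^2/2) * (-x)) x := by
  have h0 : HasDerivAt (fun y : ℝ => -y^2/2) (-x) x := by
    have := ((hasDerivAt_pow 2 x).neg.div_const 2)
    exact this.congr_deriv (by norm_num; ring)
  exact h0.exp

open Filter Set in
private lemma aux_tail (b : ℝ) :
    ∫ x in Set.Ioi b, x * Real.exp (-x^2/2) = Real.exp (-b^2/2) := by
  have hderiv : ∀ x ∈ Set.Ici b, HasDerivAt (fun y : ℝ => -Real.exp (-y^2/2))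
      (x * Real.exp (-x^2/2)) x := by
    intro x _
    have := (aux_deriv_exp x).neg
    exact this.congr_deriv (by ring)
  have hint : IntegrableOn (fun x : ℝ => x * Real.exp (-x^2/2)) (Set.Ioi b) := by
    have : Integrable (fun x : ℝ => x * Real.exp (-(1/2 : ℝ) * x^2)) :=
      integrable_mul_exp_neg_mul_sq (by norm_num)
    have h2 : (fun x : ℝ => x * Real.exp (-x^2/2)) =
        (fun x : ℝ => x * Real.exp (-(1/2 : ℝ) * x^2)) := by
      funext x; ring_nf
    rw [h2]
    exact this.integrableOn
  have htend : Tendsto (fun x : ℝ => -Real.exp (-x^2/2)) atTop (nhds 0) := by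
    have h1 : Tendsto (fun x : ℝ => x^2/2) atTop atTop :=
      (tendsto_pow_atTop two_ne_zero).atTop_div_const (by norm_num)
    have h2 := Real.tendsto_exp_neg_atTop_nhds_zero.comp h1
    have h3 : Tendsto (fun x : ℝ => Real.exp (-x^2/2)) atTop (nhds 0) := by
      refine h2.congr fun x => ?_
      simp only [Function.comp]
      ring_nf
    simpa using h3.neg
  have := MeasureTheory.integral_Ioi_of_hasDerivAt_of_tendsto' hderiv hint htend
  rw [this]; ring

open Filter Set in
private lemma aux_mid (b : ℝ) (hb : 0 ≤ b) :
    ∫ x in (0:ℝ)..b, x^2 * Real.exp (-x^2/2)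
      = (∫ x in (0:ℝ)..b, Real.exp (-x^2/2)) - b * Real.exp (-b^2/2) := by
  have hderiv : ∀ x ∈ Set.uIcc (0:ℝ) b, HasDerivAt (fun y : ℝ => -(y * Real.exp (-y^2/2)))
      (x^2 * Real.exp (-x^2/2) - Real.exp (-x^2/2)) x := by
    intro x _
    have := ((hasDerivAt_id x).mul (aux_deriv_exp x)).neg
    exact this.congr_deriv (by simp only [id]; ring)
  have hi1 : IntervalIntegrable (fun x : ℝ => x^2 * Real.exp (-x^2/2)) MeasureTheory.volume 0 b :=
    (by continuity : Continuous fun x : ℝ => x^2 * Real.exp (-x^2/2)).intervalIntegrable 0 b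
  have hi2 : IntervalIntegrable (fun x : ℝ => Real.exp (-x^2/2)) MeasureTheory.volume 0 b :=
    aux_exp_cont.intervalIntegrable 0 b
  have hftc := intervalIntegral.integral_eq_sub_of_hasDerivAt hderiv (hi1.sub hi2)
  rw [intervalIntegral.integral_sub hi1 hi2] at hftc
  have : (0:ℝ) * Real.exp (-(0:ℝ)^2/2) = 0 := by ring
  rw [show (-(((0:ℝ)) * Real.exp (-(0:ℝ)^2/2))) = 0 by norm_num] at hftc
  linarith [hftc]

open Filter Set in
private lemma aux_erf (b : ℝ) :
    ∫ x in (0:ℝ)..b, Real.exp (-x^2/2)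
      = Real.sqrt 2 * (Real.sqrt Real.pi / 2) * erf (b / Real.sqrt 2) := by
  have h2 : (Real.sqrt 2) ≠ 0 := by positivity
  have key : ∫ x in (0:ℝ)..b, Real.exp (-x^2/2)
      = ∫ x in (0:ℝ)..b, (fun s => Real.exp (-(s^2))) (x / Real.sqrt 2) := by
    refine intervalIntegral.integral_congr fun x _ => ?_
    simp only
    congr 1
    rw [div_pow, Real.sq_sqrt (by norm_num : (0:ℝ) ≤ 2)]
    ring
  rw [key, intervalIntegral.integral_comp_div (fun s => Real.exp (-(s^2))) h2]
  rw [erf]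
  have hpi : Real.sqrt Real.pi ≠ 0 := by positivity
  rw [zero_div]
  rw [smul_eq_mul]
  field_simp

theorem stmt0 (lam a : ℝ) (hlam : 0 < lam) (ha : 0 ≤ a) :
    (∫ x, |x| * min (lam * |x|) a ∂(gaussianReal 0 1))
      = lam * erf (a / (Real.sqrt 2 * lam)) := by
  set b : ℝ := a / lam with hbdef
  have hb : 0 ≤ b := div_nonneg ha hlam.le
  have hab : lam * b = a := by rw [hbdef]; field_simp
  set c : ℝ := (Real.sqrt (2 * Real.pi))⁻¹ with hcdef
  set G : ℝ → ℝ := fun t => c * Real.exp (-t^2/2) * (t * min (lam * t) a) with hGdef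
  have hGcont : Continuous G := by
    apply Continuous.mul
    · fun_prop
    · exact continuous_id.mul ((continuous_const.mul continuous_id).min continuous_const)
  have hpdf : ∀ x : ℝ, gaussianPDFReal 0 1 x = c * Real.exp (-x^2/2) := by
    intro x
    rw [hcdef]
    simp [gaussianPDFReal]
  -- Step 1 : to a Lebesgue integral
  have hmeas : gaussianReal 0 1
      = MeasureTheory.Measure.withDensity MeasureTheory.volume
        (fun x => ((gaussianPDFReal 0 1 x).toNNReal : ENNReal)) := by
    rw [gaussianReal_of_var_ne_zero _ one_ne_zero]; rfl
  have h1 : (∫ x, |x| * min (lam * |x|) a ∂(gaussianReal 0 1))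
      = ∫ x, gaussianPDFReal 0 1 x * (|x| * min (lam * |x|) a) := by
    rw [hmeas, integral_withDensity_eq_integral_smul
      ((measurable_gaussianPDFReal 0 1).real_toNNReal)]
    refine integral_congr_ae (Filter.Eventually.of_forall fun x => ?_)
    simp only [NNReal.smul_def, Real.coe_toNNReal _ (gaussianPDFReal_nonneg 0 1 x), smul_eq_mul]
  have h2 : ∀ x : ℝ, gaussianPDFReal 0 1 x * (|x| * min (lam * |x|) a) = G (|x|) := by
    intro x
    rw [hpdf x, hGdef]
    simp only
    rw [sq_abs]
  -- integrability on pieces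
  have hIoc : IntegrableOn G (Set.Ioc 0 b) := hGcont.integrableOn_Ioc
  have htailint : Integrable (fun x : ℝ => x * Real.exp (-x^2/2)) := by
    have : Integrable (fun x : ℝ => x * Real.exp (-(1/2 : ℝ) * x^2)) :=
      integrable_mul_exp_neg_mul_sq (by norm_num)
    have h4 : (fun x : ℝ => x * Real.exp (-x^2/2)) =
        (fun x : ℝ => x * Real.exp (-(1/2 : ℝ) * x^2)) := by
      funext x; ring_nf
    rw [h4]; exact this
  have hGtail : Set.EqOn (fun x : ℝ => c * a * (x * Real.exp (-x^2/2))) G (Set.Ioi b) := by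
    intro x hx
    have hx' : b < x := hx
    have hmin : min (lam * x) a = a := by
      apply min_eq_right
      calc a = lam * b := hab.symm
        _ ≤ lam * x := by nlinarith
    simp only [hGdef, hmin]
    ring
  have hIoi : IntegrableOn G (Set.Ioi b) := by
    refine IntegrableOn.congr_fun ?_ hGtail measurableSet_Ioi
    exact ((htailint.const_mul (c * a))).integrableOn
  have hsplit : ∫ x in Set.Ioi (0:ℝ), G x
      = (∫ x in Set.Ioc 0 b, G x) + ∫ x in Set.Ioi b, G x := by
    rw [← Set.Ioc_union_Ioi_eq_Ioi hb,
      setIntegral_union (Set.Ioc_disjoint_Ioi le_rfl) measurableSet_Ioi hIoc hIoi]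
  -- middle piece
  have hmid : ∫ x in Set.Ioc (0:ℝ) b, G x
      = c * lam * ((∫ x in (0:ℝ)..b, Real.exp (-x^2/2)) - b * Real.exp (-b^2/2)) := by
    have hcg : ∀ x ∈ Set.Ioc (0:ℝ) b, G x = c * lam * (x^2 * Real.exp (-x^2/2)) := by
      intro x hx
      have hmin : min (lam * x) a = lam * x := by
        apply min_eq_left
        calc lam * x ≤ lam * b := by nlinarith [hx.2]
          _ = a := hab
      simp only [hGdef, hmin]
      ring
    rw [setIntegral_congr_fun measurableSet_Ioc hcg, ← intervalIntegral.integral_of_le hb,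
      intervalIntegral.integral_const_mul, aux_mid b hb]
  -- tail piece
  have htail : ∫ x in Set.Ioi b, G x = c * a * Real.exp (-b^2/2) := by
    rw [← setIntegral_congr_fun measurableSet_Ioi hGtail]
    rw [MeasureTheory.integral_const_mul, aux_tail b]
  -- assemble
  rw [h1]
  calc (∫ x, gaussianPDFReal 0 1 x * (|x| * min (lam * |x|) a))
      = ∫ x : ℝ, G (|x|) := by congr 1; funext x; exact h2 x
    _ = 2 * ∫ x in Set.Ioi (0:ℝ), G x := integral_comp_abs
    _ = 2 * (c * lam * ((∫ x in (0:ℝ)..b, Real.exp (-x^2/2)) - b * Real.exp (-b^2/2))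
          + c * a * Real.exp (-b^2/2)) := by rw [hsplit, hmid, htail]
    _ = 2 * c * lam * (Real.sqrt 2 * (Real.sqrt Real.pi / 2) * erf (b / Real.sqrt 2)) := by
        rw [aux_erf b, ← hab]; ring
    _ = lam * erf (a / (Real.sqrt 2 * lam)) := by
        have harg : b / Real.sqrt 2 = a / (Real.sqrt 2 * lam) := by
          rw [hbdef]
          ring
        have hc1 : c * (Real.sqrt 2 * Real.sqrt Real.pi) = 1 := by
          rw [hcdef, ← Real.sqrt_mul (by norm_num : (0:ℝ) ≤ 2)]
          rw [inv_mul_cancel₀ (by positivity)]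
        rw [harg]
        linear_combination lam * erf (a / (Real.sqrt 2 * lam)) * hc1
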